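/- arXiv:1401.3355 — 3 statements merged into one kernel-verified Lean document; each statement's English description precedes it below -/
import Mathlib

section
/- Let M ⊆ N be von Neumann algebras with a faithful normal conditional expectation E: N → M. If K is a convex subset of N that is closed in the Bures topology (the topology generated by the seminorms x ↦ φ(E(x*x))^{1/2} for normal states φ on M), then K is closed in the weak* topology on N. -/
open scoped ENNReal


/- STATEMENT 0: Let M ⊆ N be von Neumann algebras with a faithful normal conditional
expectation E : N → M.  If K is a convex subset of N that is closed in the Bures topology
(generated by the seminorms x ↦ φ(E(x*x))^{1/2} for normal states φ), then K is closed in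
the weak* (σ-weak) topology on N. -/

noncomputable section

/-- The σ-weak (weak-*) topology on `B(H)`: the initial topology for the functionals
`T ↦ ∑' n, ⟪T ξₙ, ηₙ⟫` with `∑ ‖ξₙ‖² < ∞` and `∑ ‖ηₙ‖² < ∞`. -/
def sigmaWeak (H : Type*) [NormedAddCommGroup H] [InnerProductSpace ℂ H] :
    TopologicalSpace (H →L[ℂ] H) :=
  ⨅ p : { q : (ℕ → H) × (ℕ → H) //
      Summable (fun n => ‖q.1 n‖ ^ 2) ∧ Summable (fun n => ‖q.2 n‖ ^ 2) },
    TopologicalSpace.induced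
      (fun T : H →L[ℂ] H => ∑' n, (inner ℂ (T (p.1.1 n)) (p.1.2 n) : ℂ)) inferInstance

/-- A normal state on `B(H)` (its restrictions to a von Neumann subalgebra `M` are exactly
the normal states of `M`). -/
structure NormalState (H : Type*) [NormedAddCommGroup H] [InnerProductSpace ℂ H]
    [CompleteSpace H] where
  toLin : (H →L[ℂ] H) →ₗ[ℂ] ℂ
  map_one' : toLin 1 = 1
  pos_re' : ∀ x, 0 ≤ (toLin (star x * x)).re
  pos_im' : ∀ x, (toLin (star x * x)).im = 0
  normal' : @Continuous _ _ (sigmaWeak H) _ toLin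

namespace BuresAux

variable {H : Type*} [NormedAddCommGroup H] [InnerProductSpace ℂ H]


variable {H : Type*} [NormedAddCommGroup H] [InnerProductSpace ℂ H]

/-- interleaving of two sequences -/
def mix {α : Type*} (a b : ℕ → α) : ℕ → α :=
  fun m => if Even m then a (m / 2) else b (m / 2)

@[simp] lemma mix_even {α : Type*} (a b : ℕ → α) (k : ℕ) : mix a b (2 * k) = a k := by
  have h : Even (2 * k) := ⟨k, two_mul k⟩
  simp only [mix, if_pos h]
  congr 1
  omega

@[simp] lemma mix_odd {α : Type*} (a b : ℕ → α) (k : ℕ) : mix a b (2 * k + 1) = b k := by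
  have h : ¬ Even (2 * k + 1) := by
    simp [Nat.even_add_one, parity_simps]
  simp only [mix, if_neg h]
  congr 1
  omega

lemma summable_comp_mix {α : Type*} {E : Type*} [AddCommMonoid E] [TopologicalSpace E]
    [ContinuousAdd E] {F : α → E} {a b : ℕ → α}
    (ha : Summable fun n => F (a n)) (hb : Summable fun n => F (b n)) :
    Summable fun m => F (mix a b m) := by
  apply Summable.even_add_odd
  · simpa only [mix_even] using ha
  · simpa only [mix_odd] using hb

lemma tsum_comp_mix {α : Type*} {E : Type*} [AddCommMonoid E] [TopologicalSpace E]
    [ContinuousAdd E] [T2Space E] {F : α → E} {a b : ℕ → α}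
    (ha : Summable fun n => F (a n)) (hb : Summable fun n => F (b n)) :
    ∑' m, F (mix a b m) = (∑' n, F (a n)) + ∑' n, F (b n) := by
  have h1 : Summable fun k => F (mix a b (2 * k)) := by simpa only [mix_even] using ha
  have h2 : Summable fun k => F (mix a b (2 * k + 1)) := by simpa only [mix_odd] using hb
  calc ∑' m, F (mix a b m)
      = (∑' k, F (mix a b (2 * k))) + ∑' k, F (mix a b (2 * k + 1)) :=
        (tsum_even_add_odd (f := fun m => F (mix a b m)) h1 h2).symm
    _ = (∑' n, F (a n)) + ∑' n, F (b n) := by simp only [mix_even, mix_odd]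

lemma summable_norm_mul {ξ η : ℕ → H} (hξ : Summable fun n => ‖ξ n‖ ^ 2)
    (hη : Summable fun n => ‖η n‖ ^ 2) :
    Summable fun n => ‖ξ n‖ * ‖η n‖ := by
  refine Summable.of_nonneg_of_le (fun n => by positivity) (fun n => ?_) (hξ.add hη)
  nlinarith [sq_nonneg (‖ξ n‖ - ‖η n‖), norm_nonneg (ξ n), norm_nonneg (η n)]

lemma summable_term {ξ η : ℕ → H} (hξ : Summable fun n => ‖ξ n‖ ^ 2)
    (hη : Summable fun n => ‖η n‖ ^ 2) (T : H →L[ℂ] H) :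
    Summable fun n => (inner ℂ (η n) (T (ξ n)) : ℂ) := by
  refine Summable.of_norm (Summable.of_nonneg_of_le (fun n => norm_nonneg _) (fun n => ?_)
    ((summable_norm_mul hξ hη).mul_left ‖T‖))
  calc ‖(inner ℂ (η n) (T (ξ n)) : ℂ)‖ ≤ ‖η n‖ * ‖T (ξ n)‖ := norm_inner_le_norm _ _
    _ ≤ ‖η n‖ * (‖T‖ * ‖ξ n‖) :=
        mul_le_mul_of_nonneg_left (T.le_opNorm (ξ n)) (norm_nonneg _)
    _ = ‖T‖ * (‖ξ n‖ * ‖η n‖) := by ring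

lemma summable_img {a : ℕ → H} (ha : Summable fun n => ‖a n‖ ^ 2) (v : H →L[ℂ] H) :
    Summable fun n => ‖v (a n)‖ ^ 2 := by
  refine Summable.of_nonneg_of_le (fun n => by positivity) (fun n => ?_) (ha.mul_left (‖v‖ ^ 2))
  have h := v.le_opNorm (a n)
  nlinarith [norm_nonneg (a n), norm_nonneg (v (a n)), norm_nonneg v]

/-- the class of functionals representable in σ-weak "normal" form -/
def RepN (F : (H →L[ℂ] H) → ℂ) : Prop :=
  ∃ ξ η : ℕ → H,
    Summable (fun n => ‖ξ n‖ ^ 2) ∧ Summable (fun n => ‖η n‖ ^ 2) ∧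
    ∀ T, F T = ∑' n, (inner ℂ (η n) (T (ξ n)) : ℂ)

lemma repN_congr {F G : (H →L[ℂ] H) → ℂ} (h : ∀ T, F T = G T) (hG : RepN G) : RepN F := by
  obtain ⟨ξ, η, h1, h2, h3⟩ := hG
  exact ⟨ξ, η, h1, h2, fun T => (h T).trans (h3 T)⟩

lemma repN_zero : RepN (H := H) fun _ => 0 := by
  refine ⟨0, 0, by simpa using summable_zero, by simpa using summable_zero, fun T => ?_⟩
  simp

lemma repN_smul (c : ℂ) {F : (H →L[ℂ] H) → ℂ} (h : RepN F) : RepN fun T => c * F T := by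
  obtain ⟨ξ, η, h1, h2, h3⟩ := h
  refine ⟨ξ, fun n => (starRingEnd ℂ c) • η n, h1, ?_, fun T => ?_⟩
  · simpa only [norm_smul, mul_pow, RCLike.norm_conj] using h2.mul_left (‖c‖ ^ 2)
  · show c * F T = _
    rw [h3, ← tsum_mul_left]
    congr 1
    funext n
    rw [inner_smul_left]
    simp

lemma repN_add {F G : (H →L[ℂ] H) → ℂ} (hF : RepN F) (hG : RepN G) :
    RepN fun T => F T + G T := by
  obtain ⟨ξ₁, η₁, ha1, ha2, ha3⟩ := hF
  obtain ⟨ξ₂, η₂, hb1, hb2, hb3⟩ := hG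
  refine ⟨mix ξ₁ ξ₂, mix η₁ η₂,
    summable_comp_mix (F := fun x : H => ‖x‖ ^ 2) (a := ξ₁) (b := ξ₂) ha1 hb1,
    summable_comp_mix (F := fun x : H => ‖x‖ ^ 2) (a := η₁) (b := η₂) ha2 hb2, fun T => ?_⟩
  have h1 : Summable fun k =>
      (inner ℂ ((mix η₁ η₂) (2 * k)) (T ((mix ξ₁ ξ₂) (2 * k))) : ℂ) := by
    simpa only [mix_even] using summable_term ha1 ha2 T
  have h2 : Summable fun k =>
      (inner ℂ ((mix η₁ η₂) (2 * k + 1)) (T ((mix ξ₁ ξ₂) (2 * k + 1))) : ℂ) := by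
    simpa only [mix_odd] using summable_term hb1 hb2 T
  calc F T + G T
      = (∑' k, (inner ℂ ((mix η₁ η₂) (2 * k)) (T ((mix ξ₁ ξ₂) (2 * k))) : ℂ))
        + ∑' k, (inner ℂ ((mix η₁ η₂) (2 * k + 1)) (T ((mix ξ₁ ξ₂) (2 * k + 1))) : ℂ) := by
        rw [ha3, hb3]; simp only [mix_even, mix_odd]
    _ = ∑' n, (inner ℂ ((mix η₁ η₂) n) (T ((mix ξ₁ ξ₂) n)) : ℂ) :=
        tsum_even_add_odd (f := fun n => (inner ℂ ((mix η₁ η₂) n) (T ((mix ξ₁ ξ₂) n)) : ℂ)) h1 h2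

lemma repN_sum {γ : Type*} (s : Finset γ) (F : γ → (H →L[ℂ] H) → ℂ)
    (h : ∀ i ∈ s, RepN (F i)) : RepN fun T => ∑ i ∈ s, F i T := by
  classical
  induction s using Finset.induction_on with
  | empty => exact repN_congr (by simp) repN_zero
  | @insert a s ha ih =>
    refine repN_congr (fun T => Finset.sum_insert ha) ?_
    exact repN_add (h a (Finset.mem_insert_self a s))
      (ih fun i hi => h i (Finset.mem_insert_of_mem hi))


/-- index type of the defining seminorm pairs -/
abbrev PIdx (H : Type*) [NormedAddCommGroup H] [InnerProductSpace ℂ H] :=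
  { q : (ℕ → H) × (ℕ → H) //
      Summable (fun n => ‖q.1 n‖ ^ 2) ∧ Summable (fun n => ‖q.2 n‖ ^ 2) }

/-- the defining (conjugate-linear) functionals of the σ-weak topology -/
def fp (p : PIdx H) : (H →L[ℂ] H) → ℂ :=
  fun T => ∑' n, (inner ℂ (T (p.1.1 n)) (p.1.2 n) : ℂ)

/-- the conjugated, honestly linear version of `fp` -/
def gLin (p : PIdx H) : (H →L[ℂ] H) →ₗ[ℂ] ℂ where
  toFun := fun T => ∑' n, (inner ℂ (p.1.2 n) (T (p.1.1 n)) : ℂ)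
  map_add' := fun T S => by
    show (∑' n, (inner ℂ (p.1.2 n) ((T + S) (p.1.1 n)) : ℂ)) = _
    rw [← Summable.tsum_add (summable_term p.2.1 p.2.2 T) (summable_term p.2.1 p.2.2 S)]
    congr 1; funext n
    rw [ContinuousLinearMap.add_apply, inner_add_right]
  map_smul' := fun c T => by
    show (∑' n, (inner ℂ (p.1.2 n) ((c • T) (p.1.1 n)) : ℂ)) = _
    simp only [RingHom.id_apply, smul_eq_mul]
    rw [← tsum_mul_left]
    congr 1; funext n
    rw [ContinuousLinearMap.smul_apply, inner_smul_right]

lemma gLin_eq_conj_fp (p : PIdx H) (T : H →L[ℂ] H) :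
    gLin p T = starRingEnd ℂ (fp p T) := by
  show (∑' n, (inner ℂ (p.1.2 n) (T (p.1.1 n)) : ℂ)) = _
  rw [show (starRingEnd ℂ) (fp p T) = star (fp p T) from rfl, fp, tsum_star]
  congr 1; funext n
  rw [show star (inner ℂ (T (p.1.1 n)) (p.1.2 n) : ℂ)
      = starRingEnd ℂ (inner ℂ (T (p.1.1 n)) (p.1.2 n) : ℂ) from rfl, inner_conj_symm]

lemma fp_zero (p : PIdx H) : fp p (0 : H →L[ℂ] H) = 0 := by
  simp [fp]

lemma fp_smul (p : PIdx H) (c : ℂ) (T : H →L[ℂ] H) :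
    fp p (c • T) = starRingEnd ℂ c * fp p T := by
  rw [fp, fp, ← tsum_mul_left]
  congr 1; funext n
  rw [ContinuousLinearMap.smul_apply, inner_smul_left]

lemma repN_of_continuous (ψ : (H →L[ℂ] H) →ₗ[ℂ] ℂ)
    (hψ : @Continuous _ _ (sigmaWeak H) _ ψ) : RepN fun T => ψ T := by
  classical
  -- the unit ball preimage is a σ-weak neighborhood of 0
  have ht : Filter.Tendsto ψ (@nhds _ (sigmaWeak H) 0) (nhds 0) := by
    have := @Continuous.tendsto _ _ (sigmaWeak H) _ ψ hψ 0
    rwa [map_zero] at this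
  have h0 : ψ ⁻¹' Metric.ball (0 : ℂ) 1 ∈ @nhds _ (sigmaWeak H) (0 : H →L[ℂ] H) :=
    ht (Metric.ball_mem_nhds (0 : ℂ) one_pos)
  have hnhds : @nhds _ (sigmaWeak H) (0 : H →L[ℂ] H)
      = ⨅ p : PIdx H, Filter.comap (fp p) (nhds (0 : ℂ)) := by
    rw [sigmaWeak, nhds_iInf]
    refine iInf_congr fun p => ?_
    rw [nhds_induced]
    exact congrArg _ (congrArg _ (fp_zero p))
  rw [hnhds] at h0
  obtain ⟨I, hIfin, V, hV, hs⟩ := Filter.mem_iInf.mp h0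
  -- extract ε-balls
  have hVb : ∀ i : I, ∃ δ : ℝ, 0 < δ ∧ ∀ T : H →L[ℂ] H, ‖fp i.1 T‖ < δ → T ∈ V i := by
    intro i
    obtain ⟨t, ht', hsub⟩ := Filter.mem_comap.mp (hV i)
    obtain ⟨δ, hδ, hball⟩ := Metric.mem_nhds_iff.mp ht'
    refine ⟨δ, hδ, fun T hT => hsub ?_⟩
    apply hball
    simpa [mem_ball_zero_iff] using hT
  choose δ hδpos hVmem using hVb
  -- common kernel of the `gLin i` is contained in the kernel of ψ
  have hker : (⨅ i : I, LinearMap.ker (gLin i.1)) ≤ LinearMap.ker ψ := by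
    intro T hT
    rw [Submodule.mem_iInf] at hT
    have hfp : ∀ i : I, fp i.1 T = 0 := by
      intro i
      have := hT i
      rw [LinearMap.mem_ker, gLin_eq_conj_fp] at this
      exact (starRingEnd ℂ).injective (by simpa using this)
    have hc : ∀ c : ℂ, ‖ψ (c • T)‖ < 1 := by
      intro c
      have hmem : c • T ∈ ψ ⁻¹' Metric.ball (0 : ℂ) 1 := by
        rw [hs, Set.mem_iInter]
        intro i
        apply hVmem i
        rw [fp_smul, hfp i, mul_zero, norm_zero]
        exact hδpos i
      simpa [mem_ball_zero_iff] using hmem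
    rw [LinearMap.mem_ker]
    by_contra hne
    have h2 := hc (2 / ψ T)
    rw [map_smul, smul_eq_mul, div_mul_cancel₀ _ hne] at h2
    norm_num at h2
  haveI : Finite I := hIfin.to_subtype
  have hspan : ψ ∈ Submodule.span ℂ (Set.range fun i : I => gLin i.1) :=
    mem_span_of_iInf_ker_le_ker hker
  haveI : Fintype I := hIfin.fintype
  obtain ⟨c, hc⟩ := (Submodule.mem_span_range_iff_exists_fun ℂ).mp hspan
  have hval : ∀ T, ψ T = ∑ i : I, c i * gLin i.1 T := by
    intro T
    rw [← hc]
    simp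
  refine repN_congr hval ?_
  exact repN_sum Finset.univ (fun i T => c i * gLin i.1 T)
    (fun i _ => repN_smul (c i) ⟨i.1.1.1, i.1.1.2, i.1.2.1, i.1.2.2, fun T => rfl⟩)


/-- With complete `H`: the basic quadratic estimate. -/
lemma bound_aux [CompleteSpace H] {ξ η : ℕ → H} (hξ : Summable fun n => ‖ξ n‖ ^ 2)
    (hη : Summable fun n => ‖η n‖ ^ 2) (G : (H →L[ℂ] H) → ℂ)
    (hG : ∀ T, G T = ∑' n, (inner ℂ (η n) (T (ξ n)) : ℂ)) (v : H →L[ℂ] H) :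
    (G (star v * v)).re ≤ ∑' n, (‖v (ξ n)‖ ^ 2 + ‖v (η n)‖ ^ 2) := by
  have hterm : ∀ n, (inner ℂ (η n) ((star v * v) (ξ n)) : ℂ)
      = (inner ℂ (v (η n)) (v (ξ n)) : ℂ) := by
    intro n
    rw [ContinuousLinearMap.mul_apply, ContinuousLinearMap.star_eq_adjoint,
      ContinuousLinearMap.adjoint_inner_right]
  have hbnd : ∀ n, ‖(inner ℂ (η n) ((star v * v) (ξ n)) : ℂ)‖
      ≤ ‖v (ξ n)‖ ^ 2 + ‖v (η n)‖ ^ 2 := by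
    intro n
    rw [hterm n]
    refine (norm_inner_le_norm _ _).trans ?_
    nlinarith [sq_nonneg (‖v (η n)‖ - ‖v (ξ n)‖), norm_nonneg (v (η n)), norm_nonneg (v (ξ n))]
  have hsumR : Summable fun n => ‖v (ξ n)‖ ^ 2 + ‖v (η n)‖ ^ 2 :=
    (summable_img hξ v).add (summable_img hη v)
  have hsumL : Summable fun n => ‖(inner ℂ (η n) ((star v * v) (ξ n)) : ℂ)‖ :=
    Summable.of_nonneg_of_le (fun n => norm_nonneg _) hbnd hsumR
  rw [hG]
  calc (∑' n, (inner ℂ (η n) ((star v * v) (ξ n)) : ℂ)).re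
      ≤ ‖∑' n, (inner ℂ (η n) ((star v * v) (ξ n)) : ℂ)‖ := Complex.re_le_norm _
    _ ≤ ∑' n, ‖(inner ℂ (η n) ((star v * v) (ξ n)) : ℂ)‖ := norm_tsum_le_tsum_norm hsumL
    _ ≤ ∑' n, (‖v (ξ n)‖ ^ 2 + ‖v (η n)‖ ^ 2) := Summable.tsum_le_tsum hbnd hsumL hsumR

/-- combining finitely many square-summable families into a dominating one -/
lemma combine {n : ℕ} (ζ : Fin n → ℕ → H)
    (hζ : ∀ i, Summable fun m => ‖ζ i m‖ ^ 2) :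
    ∃ Z : ℕ → H, Summable (fun m => ‖Z m‖ ^ 2) ∧
      ∀ (i : Fin n) (v : H →L[ℂ] H),
        (∑' m, ‖v (ζ i m)‖ ^ 2) ≤ ∑' m, ‖v (Z m)‖ ^ 2 := by
  induction n with
  | zero =>
    exact ⟨0, by simpa using summable_zero, fun i => i.elim0⟩
  | succ n ih =>
    obtain ⟨Z', hZ', hb⟩ := ih (fun i => ζ i.succ) (fun i => hζ i.succ)
    refine ⟨mix (ζ 0) Z',
      summable_comp_mix (F := fun x : H => ‖x‖ ^ 2) (a := ζ 0) (b := Z') (hζ 0) hZ', ?_⟩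
    intro i v
    have htot : ∑' m, ‖v (mix (ζ 0) Z' m)‖ ^ 2
        = (∑' m, ‖v (ζ 0 m)‖ ^ 2) + ∑' m, ‖v (Z' m)‖ ^ 2 :=
      tsum_comp_mix (F := fun x : H => ‖v x‖ ^ 2) (a := ζ 0) (b := Z')
        (summable_img (hζ 0) v) (summable_img hZ' v)
    refine Fin.cases ?_ (fun j => ?_) i
    · rw [htot]
      exact le_add_of_nonneg_right (tsum_nonneg fun m => by positivity)
    · rw [htot]
      exact (hb j v).trans (le_add_of_nonneg_left (tsum_nonneg fun m => by positivity))


lemma fp_continuous (q : PIdx H) : @Continuous _ _ (sigmaWeak H) _ (fp (H := H) q) :=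
  continuous_iInf_dom (continuous_induced_dom (t := inferInstance))

lemma rpow_toReal_two (x : ℝ) : x ^ ((2 : ℝ≥0∞).toReal) = x ^ (2 : ℕ) := by
  rw [show ((2:ℝ≥0∞).toReal) = ((2:ℕ):ℝ) by simp, Real.rpow_natCast]

/-- The key separation argument: if `K` is convex, `x₀` is in the σ-weak closure of `K`,
but `K` stays uniformly `ε`-far from `x₀` in the Hilbert seminorm given by `Z`,
we get a contradiction. -/
lemma key_sep [CompleteSpace H] {K : Set (H →L[ℂ] H)} {x₀ : H →L[ℂ] H}
    (hconv : ∀ x ∈ K, ∀ y ∈ K, ∀ t : ℝ, 0 ≤ t → t ≤ 1 →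
        ((t : ℂ) • x + ((1 - t : ℝ) : ℂ) • y) ∈ K)
    (hcl : x₀ ∈ @closure _ (sigmaWeak H) K)
    {Z : ℕ → H} (hZ : Summable fun m => ‖Z m‖ ^ 2)
    {ε : ℝ} (hε : 0 < ε)
    (hkey : ∀ y ∈ K, ε ^ 2 ≤ ∑' m, ‖(y - x₀) (Z m)‖ ^ 2) : False := by
  classical
  -- K is nonempty
  have hKne : K.Nonempty := by
    rcases K.eq_empty_or_nonempty with h | h
    · rw [h, @closure_empty _ (sigmaWeak H)] at hcl
      exact hcl.elim
    · exact h
  obtain ⟨y₀, hy₀⟩ := hKne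
  -- the Hilbert space and the map Φ
  have hmem : ∀ v : H →L[ℂ] H, Memℓp (fun m => v (Z m)) 2 := by
    intro v
    apply memℓp_gen
    refine Summable.congr (summable_img hZ v) fun m => ?_
    exact (rpow_toReal_two _).symm
  set Φ : (H →L[ℂ] H) → lp (fun _ : ℕ => H) 2 := fun v => ⟨fun m => v (Z m), hmem v⟩ with hΦ
  have hΦapp : ∀ (v : H →L[ℂ] H) (m : ℕ), (Φ v : ∀ _ : ℕ, H) m = v (Z m) := fun v m => rfl
  have hΦsub : ∀ u v : H →L[ℂ] H, Φ u - Φ v = Φ (u - v) := by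
    intro u v
    apply lp.ext
    rw [lp.coeFn_sub]
    funext m
    simp only [Pi.sub_apply, hΦapp, ContinuousLinearMap.sub_apply]
  -- norms of Φ
  have hnormsq : ∀ v : H →L[ℂ] H, ‖Φ v‖ ^ 2 = ∑' m, ‖v (Z m)‖ ^ 2 := by
    intro v
    have h0 : (0:ℝ) < (2:ℝ≥0∞).toReal := by norm_num
    have h1 := lp.norm_rpow_eq_tsum h0 (Φ v)
    rw [rpow_toReal_two] at h1
    rw [h1]
    congr 1
    funext m
    rw [rpow_toReal_two, hΦapp]
  -- real inner product structure
  letI : InnerProductSpace ℝ (lp (fun _ : ℕ => H) 2) :=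
    InnerProductSpace.rclikeToReal ℂ _
  -- convexity of the image
  have hCset : Convex ℝ (Φ '' K) := by
    rintro _ ⟨y₁, hy₁, rfl⟩ _ ⟨y₂, hy₂, rfl⟩ a b ha hb hab
    have hb' : b = 1 - a := by linarith
    subst hb'
    have hmemK := hconv y₁ hy₁ y₂ hy₂ a ha (by linarith)
    refine ⟨_, hmemK, ?_⟩
    apply lp.ext
    have hcoe : ∀ (r : ℝ) (g : lp (fun _ : ℕ => H) 2), r • g = (r : ℂ) • g := fun r g => rfl
    rw [hcoe, hcoe, lp.coeFn_add, lp.coeFn_smul, lp.coeFn_smul]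
    funext m
    simp only [Pi.add_apply, Pi.smul_apply, hΦapp, ContinuousLinearMap.add_apply,
      ContinuousLinearMap.smul_apply]
  -- projection onto the closure of the image
  set C : Set (lp (fun _ : ℕ => H) 2) := closure (Φ '' K) with hCdef
  have hCne : C.Nonempty := ⟨Φ y₀, subset_closure ⟨y₀, hy₀, rfl⟩⟩
  have hCcomp : IsComplete C := isClosed_closure.isComplete
  have hCconv : Convex ℝ C := hCset.closure
  obtain ⟨w, hwC, hw_eq⟩ := exists_norm_eq_iInf_of_complete_convex hCne hCcomp hCconv (Φ x₀)
  have hproj := (norm_eq_iInf_iff_real_inner_le_zero hCconv hwC).mp hw_eq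
  -- the gap vector
  have hdist : ∀ z ∈ Φ '' K, ε ≤ ‖Φ x₀ - z‖ := by
    rintro _ ⟨y, hy, rfl⟩
    have h1 : ε ^ 2 ≤ ‖Φ x₀ - Φ y‖ ^ 2 := by
      rw [hΦsub, hnormsq]
      refine (hkey y hy).trans (le_of_eq ?_)
      congr 1
      funext m
      rw [show x₀ - y = -(y - x₀) from (neg_sub _ _).symm]
      rw [ContinuousLinearMap.neg_apply, norm_neg]
    nlinarith [norm_nonneg (Φ x₀ - Φ y), hε]
  have hgap : ε ≤ ‖Φ x₀ - w‖ := by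
    have : w ∈ {z : lp (fun _ : ℕ => H) 2 | ε ≤ ‖Φ x₀ - z‖} := by
      refine closure_minimal hdist ?_ hwC
      exact isClosed_le continuous_const (Continuous.norm (continuous_const.sub continuous_id))
    exact this
  set g : lp (fun _ : ℕ => H) 2 := Φ x₀ - w with hgdef
  have hgpos : 0 < ‖g‖ ^ 2 := by
    have : 0 < ‖g‖ := lt_of_lt_of_le hε hgap
    positivity
  -- bound on K through the separating functional
  have hKbound : ∀ y ∈ K, (inner (𝕜 := ℝ) g (Φ y) : ℝ)
      ≤ (inner (𝕜 := ℝ) g (Φ x₀) : ℝ) - ‖g‖ ^ 2 := by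
    intro y hy
    have h1 : (inner (𝕜 := ℝ) g (Φ y - w) : ℝ) ≤ 0 :=
      hproj _ (subset_closure ⟨y, hy, rfl⟩)
    rw [inner_sub_right] at h1
    have h2 : w = Φ x₀ - g := by rw [hgdef]; abel
    have h3 : (inner (𝕜 := ℝ) g w : ℝ)
        = (inner (𝕜 := ℝ) g (Φ x₀) : ℝ) - ‖g‖ ^ 2 := by
      rw [h2, inner_sub_right, real_inner_self_eq_norm_sq]
    linarith
  -- the separating functional is σ-weakly continuous
  have hgsum : Summable fun m => ‖(g : ∀ _ : ℕ, H) m‖ ^ 2 := by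
    have h0 : (0:ℝ) < (2:ℝ≥0∞).toReal := by norm_num
    have := (memℓp_gen_iff h0).mp (lp.memℓp g)
    refine Summable.congr this fun m => rpow_toReal_two _
  set q : PIdx H := ⟨(Z, fun m => (g : ∀ _ : ℕ, H) m), ⟨hZ, hgsum⟩⟩ with hqdef
  set F : (H →L[ℂ] H) → ℝ := fun v => (fp (H := H) q v).re with hFdef
  have hF_eq : ∀ v : H →L[ℂ] H, F v = (inner (𝕜 := ℝ) g (Φ v) : ℝ) := by
    intro v
    have hsum : Summable fun m => (inner ℂ (v (Z m)) ((g : ∀ _ : ℕ, H) m) : ℂ) := by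
      have := lp.summable_inner (𝕜 := ℂ) (Φ v) g
      refine Summable.congr this fun m => by rw [hΦapp]
    have hstar : (inner (𝕜 := ℂ) g (Φ v) : ℂ)
        = star (∑' m, (inner ℂ (v (Z m)) ((g : ∀ _ : ℕ, H) m) : ℂ)) := by
      rw [lp.inner_eq_tsum, tsum_star]
      exact tsum_congr fun m => by
        rw [hΦapp]
        exact (inner_conj_symm _ _).symm
    calc F v = (∑' m, (inner ℂ (v (Z m)) ((g : ∀ _ : ℕ, H) m) : ℂ)).re := rfl
      _ = (star (∑' m, (inner ℂ (v (Z m)) ((g : ∀ _ : ℕ, H) m) : ℂ))).re := rfl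
      _ = (inner (𝕜 := ℂ) g (Φ v) : ℂ).re := by rw [hstar]
      _ = (inner (𝕜 := ℝ) g (Φ v) : ℝ) := rfl
  -- final contradiction using the closure point
  have hU : @IsOpen _ (sigmaWeak H) (F ⁻¹' Set.Ioi (F x₀ - ‖g‖ ^ 2)) := by
    have h1 : F ⁻¹' Set.Ioi (F x₀ - ‖g‖ ^ 2)
        = fp (H := H) q ⁻¹' (Complex.re ⁻¹' Set.Ioi (F x₀ - ‖g‖ ^ 2)) := rfl
    rw [h1]
    exact continuous_def.mp (fp_continuous q) _
      (continuous_def.mp Complex.continuous_re _ isOpen_Ioi)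
  have hx₀U : x₀ ∈ F ⁻¹' Set.Ioi (F x₀ - ‖g‖ ^ 2) := by
    simp only [Set.mem_preimage, Set.mem_Ioi]
    linarith
  have hint : (F ⁻¹' Set.Ioi (F x₀ - ‖g‖ ^ 2) ∩ K).Nonempty := by
    by_contra hempty
    rw [Set.not_nonempty_iff_eq_empty] at hempty
    have hsubset : K ⊆ (F ⁻¹' Set.Ioi (F x₀ - ‖g‖ ^ 2))ᶜ := by
      intro z hz hzU
      have : z ∈ F ⁻¹' Set.Ioi (F x₀ - ‖g‖ ^ 2) ∩ K := ⟨hzU, hz⟩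
      rw [hempty] at this
      exact this
    have hclosed : @IsClosed _ (sigmaWeak H) (F ⁻¹' Set.Ioi (F x₀ - ‖g‖ ^ 2))ᶜ :=
      (@isClosed_compl_iff _ (sigmaWeak H) _).mpr hU
    have hsub2 := @closure_minimal _ (sigmaWeak H) _ _ hsubset hclosed
    exact (hsub2 hcl) hx₀U
  obtain ⟨y, hyU, hyK⟩ := hint
  have h1 : F x₀ - ‖g‖ ^ 2 < F y := hyU
  have h2 : F y ≤ F x₀ - ‖g‖ ^ 2 := by
    rw [hF_eq, hF_eq]
    exact hKbound y hyK
  linarith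


end BuresAux

theorem bures_closed_convex_is_weakStar_closed
    {H : Type*} [NormedAddCommGroup H] [InnerProductSpace ℂ H] [CompleteSpace H]
    (M N : VonNeumannAlgebra H) (hMN : (M : Set (H →L[ℂ] H)) ⊆ N)
    (E : (H →L[ℂ] H) →ₗ[ℂ] (H →L[ℂ] H))
    -- `E` is a conditional expectation of `N` onto `M`:
    (hrange : ∀ x ∈ N, E x ∈ M)
    (hid : ∀ m ∈ M, E m = m)
    (hcontr : ∀ x ∈ N, ‖E x‖ ≤ ‖x‖)
    (hbimod : ∀ m₁ ∈ M, ∀ m₂ ∈ M, ∀ x ∈ N, E (m₁ * x * m₂) = m₁ * E x * m₂)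
    (hpos : ∀ x ∈ N, (E (star x * x)).IsPositive)
    -- `E` is faithful:
    (hfaithful : ∀ x ∈ N, E (star x * x) = 0 → x = 0)
    -- `E` is normal (σ-weakly continuous):
    (hnormal : @Continuous _ _ (sigmaWeak H) (sigmaWeak H) E)
    (K : Set (H →L[ℂ] H)) (hKN : K ⊆ N)
    -- `K` is convex:
    (hconv : ∀ x ∈ K, ∀ y ∈ K, ∀ t : ℝ, 0 ≤ t → t ≤ 1 →
        ((t : ℂ) • x + ((1 - t : ℝ) : ℂ) • y) ∈ K)
    -- `K` is closed in the Bures topology of the inclusion `M ⊆ N`: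
    (hB : ∀ x₀ ∈ (N : Set (H →L[ℂ] H)), x₀ ∉ K →
        ∃ (n : ℕ) (φ : Fin n → NormalState H) (ε : ℝ), 0 < ε ∧
          ∀ y ∈ (N : Set (H →L[ℂ] H)),
            (∀ i, ((φ i).toLin (E (star (y - x₀) * (y - x₀)))).re < ε ^ 2) → y ∉ K) :
    -- then `K` is weak*-closed in `N`:
    ∀ x₀ ∈ (N : Set (H →L[ℂ] H)), x₀ ∈ @closure _ (sigmaWeak H) K → x₀ ∈ K := by
  intro x₀ hx₀N hcl
  by_contra hxK
  obtain ⟨n, φ, ε, hε, hball⟩ := hB x₀ hx₀N hxK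
  suffices hfind : ∃ y ∈ K, ∀ i,
      ((φ i).toLin (E (star (y - x₀) * (y - x₀)))).re < ε ^ 2 by
    obtain ⟨y, hyK, hy2⟩ := hfind
    exact hball y (hKN hyK) hy2 hyK
  by_contra hno
  push_neg at hno
  have hrep : ∀ i : Fin n, BuresAux.RepN (H := H) fun T => (φ i).toLin (E T) := fun i =>
    BuresAux.repN_of_continuous ((φ i).toLin.comp E)
      (@Continuous.comp _ _ _ (sigmaWeak H) (sigmaWeak H) _ (⇑E) (⇑(φ i).toLin)
        ((φ i).normal') hnormal)
  choose ξ η hξ hη hrepeq using hrep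
  have hb2 : ∀ (i : Fin n) (v : H →L[ℂ] H),
      ((φ i).toLin (E (star v * v))).re
        ≤ ∑' m, ‖v (BuresAux.mix (ξ i) (η i) m)‖ ^ 2 := by
    intro i v
    have h1 := BuresAux.bound_aux (hξ i) (hη i) _ (hrepeq i) v
    have h2 : ∑' m, ‖v (BuresAux.mix (ξ i) (η i) m)‖ ^ 2
        = (∑' m, ‖v (ξ i m)‖ ^ 2) + ∑' m, ‖v (η i m)‖ ^ 2 :=
      BuresAux.tsum_comp_mix (F := fun x : H => ‖v x‖ ^ 2) (a := ξ i) (b := η i)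
        (BuresAux.summable_img (hξ i) v) (BuresAux.summable_img (hη i) v)
    have h3 : ∑' m, (‖v (ξ i m)‖ ^ 2 + ‖v (η i m)‖ ^ 2)
        = (∑' m, ‖v (ξ i m)‖ ^ 2) + ∑' m, ‖v (η i m)‖ ^ 2 :=
      Summable.tsum_add (BuresAux.summable_img (hξ i) v) (BuresAux.summable_img (hη i) v)
    rw [h2]
    rw [h3] at h1
    exact h1
  obtain ⟨Z, hZ, hZb⟩ := BuresAux.combine (fun i => BuresAux.mix (ξ i) (η i))
    (fun i => BuresAux.summable_comp_mix (F := fun x : H => ‖x‖ ^ 2)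
      (a := ξ i) (b := η i) (hξ i) (hη i))
  refine BuresAux.key_sep hconv hcl hZ hε ?_
  intro y hy
  obtain ⟨i, hi⟩ := hno y hy
  exact hi.trans ((hb2 i (y - x₀)).trans (hZb i (y - x₀)))

end
end

section
/- Let α be a *-automorphism of a von Neumann algebra Q and let a, b, c, d ∈ Q satisfy a x b = c α(x) d for all x ∈ Q. If there exists x₀ ∈ Q with a x₀ b ≠ 0, then α is not properly outer, i.e., there exists a nonzero t ∈ Q with t x = α(x) t for all x ∈ Q. -/
open scoped InnerProductSpace

open Submodule

noncomputable section NPOaux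

namespace NPO

variable {H : Type*} [NormedAddCommGroup H] [InnerProductSpace ℂ H]

/-- make an element of the L²-product -/
def mk2 (u v : H) : WithLp 2 (H × H) := (WithLp.equiv 2 (H × H)).symm (u, v)

@[simp] lemma mk2_fst (u v : H) : (mk2 u v).fst = u := rfl
@[simp] lemma mk2_snd (u v : H) : (mk2 u v).snd = v := rfl

/-- first injection -/
def J1 : H →L[ℂ] WithLp 2 (H × H) :=
  ((WithLp.prodContinuousLinearEquiv 2 ℂ H H).symm.toContinuousLinearMap).comp
    (ContinuousLinearMap.inl ℂ H H)

/-- second injection -/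
def J2 : H →L[ℂ] WithLp 2 (H × H) :=
  ((WithLp.prodContinuousLinearEquiv 2 ℂ H H).symm.toContinuousLinearMap).comp
    (ContinuousLinearMap.inr ℂ H H)

@[simp] lemma J1_fst (ξ : H) : (J1 ξ).fst = ξ := rfl
@[simp] lemma J1_snd (ξ : H) : (J1 ξ).snd = 0 := rfl
@[simp] lemma J2_fst (ξ : H) : (J2 ξ).fst = 0 := rfl
@[simp] lemma J2_snd (ξ : H) : (J2 ξ).snd = ξ := rfl

/-- diagonal-type operator on the L² product -/
def dOp (s₁ s₂ : H →L[ℂ] H) : WithLp 2 (H × H) →L[ℂ] WithLp 2 (H × H) :=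
  ((WithLp.prodContinuousLinearEquiv 2 ℂ H H).symm.toContinuousLinearMap).comp
    ((s₁.prodMap s₂).comp (WithLp.prodContinuousLinearEquiv 2 ℂ H H).toContinuousLinearMap)

@[simp] lemma dOp_fst (s₁ s₂ : H →L[ℂ] H) (u : WithLp 2 (H × H)) :
    (dOp s₁ s₂ u).fst = s₁ u.fst := rfl

@[simp] lemma dOp_snd (s₁ s₂ : H →L[ℂ] H) (u : WithLp 2 (H × H)) :
    (dOp s₁ s₂ u).snd = s₂ u.snd := rfl

lemma dOp_inner [CompleteSpace H] (s₁ s₂ : H →L[ℂ] H) (u v : WithLp 2 (H × H)) :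
    ⟪dOp s₁ s₂ u, v⟫_ℂ = ⟪u, dOp (star s₁) (star s₂) v⟫_ℂ := by
  rw [WithLp.prod_inner_apply, WithLp.prod_inner_apply]
  simp only [WithLp.ofLp_fst, WithLp.ofLp_snd]
  rw [dOp_fst, dOp_snd,
    dOp_fst, dOp_snd, ContinuousLinearMap.star_eq_adjoint,
    ContinuousLinearMap.star_eq_adjoint, ContinuousLinearMap.adjoint_inner_right,
    ContinuousLinearMap.adjoint_inner_right]

variable {E : Type*} [NormedAddCommGroup E] [InnerProductSpace ℂ E]

/-- if a continuous linear map sends `S` into `S`, it preserves the closed span of `S` -/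
lemma mapsTo_cspan (f : E →L[ℂ] E) (S : Set E) (h : ∀ s ∈ S, f s ∈ S) :
    ∀ k ∈ (Submodule.span ℂ S).topologicalClosure,
      f k ∈ (Submodule.span ℂ S).topologicalClosure := by
  set K := (Submodule.span ℂ S).topologicalClosure
  have hle : (Submodule.span ℂ S).topologicalClosure ≤ K.comap (f : E →ₗ[ℂ] E) := by
    apply Submodule.topologicalClosure_minimal
    · rw [Submodule.span_le]
      intro s hs
      exact (Submodule.span ℂ S).le_topologicalClosure (Submodule.subset_span (h s hs))
    · exact (Submodule.isClosed_topologicalClosure _).preimage f.continuous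
  exact fun k hk => hle hk

/-- commutation of the orthogonal projection with an operator preserving K whose
(formal) adjoint also preserves K. -/
lemma proj_comm (K : Submodule ℂ E) [HasOrthogonalProjection K] (A B : E →L[ℂ] E)
    (hAB : ∀ u v, ⟪A u, v⟫_ℂ = ⟪u, B v⟫_ℂ)
    (hA : ∀ k ∈ K, A k ∈ K) (hB : ∀ k ∈ K, B k ∈ K) (u : E) :
    (orthogonalProjection K (A u) : E) = A (orthogonalProjection K u) := by
  apply Submodule.eq_starProjection_of_mem_of_inner_eq_zero (K := K)
    (hA _ (orthogonalProjection K u).2)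
  intro w hw
  have h1 : A u - A (orthogonalProjection K u) = A (u - orthogonalProjection K u) := by
    rw [map_sub]
  rw [h1, hAB]
  exact Submodule.starProjection_inner_eq_zero u _ (hB w hw)

end NPO

end NPOaux

theorem not_properly_outer_of_intertwining
    {H : Type*} [NormedAddCommGroup H] [InnerProductSpace ℂ H] [CompleteSpace H]
    (Q : VonNeumannAlgebra H)
    (α : (H →L[ℂ] H) → (H →L[ℂ] H))
    -- α is a *-automorphism of Q:
    (hmem : ∀ x ∈ Q, α x ∈ Q)
    (hadd : ∀ x ∈ Q, ∀ y ∈ Q, α (x + y) = α x + α y)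
    (hsmul : ∀ (c : ℂ), ∀ x ∈ Q, α (c • x) = c • α x)
    (hmul : ∀ x ∈ Q, ∀ y ∈ Q, α (x * y) = α x * α y)
    (hstar : ∀ x ∈ Q, α (star x) = star (α x))
    (hone : α 1 = 1)
    (hinj : ∀ x ∈ Q, ∀ y ∈ Q, α x = α y → x = y)
    (hsurj : ∀ y ∈ Q, ∃ x ∈ Q, α x = y)
    (a b c d : H →L[ℂ] H) (ha : a ∈ Q) (hb : b ∈ Q) (hc : c ∈ Q) (hd : d ∈ Q)
    (hrel : ∀ x ∈ Q, a * x * b = c * α x * d)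
    (x₀ : H →L[ℂ] H) (hx₀ : x₀ ∈ Q) (hne : a * x₀ * b ≠ 0) :
    ∃ t ∈ Q, t ≠ 0 ∧ ∀ x ∈ Q, t * x = α x * t := by
  classical
  -- the generating set and the closed subspace K
  set S : Set (WithLp 2 (H × H)) :=
    {v | ∃ x ∈ Q, ∃ ξ : H, v = NPO.mk2 (x (b ξ)) ((α x) (d ξ))} with hS
  set K : Submodule ℂ (WithLp 2 (H × H)) := (Submodule.span ℂ S).topologicalClosure with hK
  -- the candidate intertwiner
  set t : H →L[ℂ] H :=
    (((ContinuousLinearMap.snd ℂ H H).comp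
        (WithLp.prodContinuousLinearEquiv 2 ℂ H H).toContinuousLinearMap).comp
      (K.subtypeL.comp (orthogonalProjection K))).comp NPO.J1 with ht
  have t_apply : ∀ ξ : H, t ξ = (orthogonalProjection K (NPO.J1 ξ) : WithLp 2 (H × H)).snd :=
    fun ξ => rfl
  -- invariance of K under the diagonal operators coming from Q
  have hinvQ : ∀ x ∈ Q, ∀ k ∈ K, NPO.dOp x (α x) k ∈ K := by
    intro x hx
    apply NPO.mapsTo_cspan
    rintro s ⟨y, hy, ξ, rfl⟩
    refine ⟨x * y, mul_mem hx hy, ξ, ?_⟩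
    refine WithLp.ofLp_injective 2 (Prod.ext ?_ ?_)
    · simp [NPO.mk2]
    · simp [NPO.mk2, hmul x hx y hy]
  -- commutation of dOp x (α x) with the projection
  have hcommQ : ∀ x ∈ Q, ∀ u, (orthogonalProjection K (NPO.dOp x (α x) u) : WithLp 2 (H × H))
      = NPO.dOp x (α x) (orthogonalProjection K u) := by
    intro x hx
    apply NPO.proj_comm K (NPO.dOp x (α x)) (NPO.dOp (star x) (α (star x)))
    · intro u v
      rw [NPO.dOp_inner]
      rw [hstar x hx]
    · exact hinvQ x hx
    · exact hinvQ (star x) (star_mem hx)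
  -- invariance of K under diagonal operators from the commutant, and commutation
  have hinvC : ∀ g ∈ Q.commutant, ∀ k ∈ K, NPO.dOp g g k ∈ K := by
    intro g hg
    apply NPO.mapsTo_cspan
    rintro s ⟨y, hy, ξ, rfl⟩
    refine ⟨y, hy, g ξ, ?_⟩
    have h1 : g ((y * b) ξ) = (y * b) (g ξ) := by
      have := (VonNeumannAlgebra.mem_commutant_iff.mp hg) (y * b) (mul_mem hy hb)
      calc g ((y * b) ξ) = (g * (y * b)) ξ := rfl
        _ = ((y * b) * g) ξ := by rw [← this]
        _ = (y * b) (g ξ) := rfl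
    have h2 : g ((α y * d) ξ) = (α y * d) (g ξ) := by
      have := (VonNeumannAlgebra.mem_commutant_iff.mp hg) (α y * d) (mul_mem (hmem y hy) hd)
      calc g ((α y * d) ξ) = (g * (α y * d)) ξ := rfl
        _ = ((α y * d) * g) ξ := by rw [← this]
        _ = (α y * d) (g ξ) := rfl
    refine WithLp.ofLp_injective 2 (Prod.ext ?_ ?_)
    · simpa [NPO.mk2] using h1
    · simpa [NPO.mk2] using h2
  have hcommC : ∀ g ∈ Q.commutant, ∀ u,
      (orthogonalProjection K (NPO.dOp g g u) : WithLp 2 (H × H))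
      = NPO.dOp g g (orthogonalProjection K u) := by
    intro g hg
    apply NPO.proj_comm K (NPO.dOp g g) (NPO.dOp (star g) (star g))
    · intro u v; exact NPO.dOp_inner g g u v
    · exact hinvC g hg
    · exact hinvC (star g) (star_mem hg)
  -- t belongs to Q
  have htQ : t ∈ Q := by
    rw [← Q.commutant_commutant]
    rw [VonNeumannAlgebra.mem_commutant_iff]
    intro g hg
    ext ξ
    have hJ : NPO.J1 (g ξ) = NPO.dOp g g (NPO.J1 ξ) := by
      refine WithLp.ofLp_injective 2 (Prod.ext ?_ ?_)
      · simp
      · simp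
    calc (g * t) ξ = g (t ξ) := rfl
      _ = g ((orthogonalProjection K (NPO.J1 ξ) : WithLp 2 (H × H)).snd) := by rw [t_apply]
      _ = (NPO.dOp g g (orthogonalProjection K (NPO.J1 ξ) : WithLp 2 (H × H))).snd := by
          rw [NPO.dOp_snd]
      _ = (orthogonalProjection K (NPO.dOp g g (NPO.J1 ξ)) : WithLp 2 (H × H)).snd := by
          rw [hcommC g hg]
      _ = (orthogonalProjection K (NPO.J1 (g ξ)) : WithLp 2 (H × H)).snd := by rw [hJ]
      _ = t (g ξ) := (t_apply _).symm
      _ = (t * g) ξ := rfl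
  -- t intertwines
  have hint : ∀ x ∈ Q, t * x = α x * t := by
    intro x hx
    ext ξ
    have hJ : NPO.J1 (x ξ) = NPO.dOp x (α x) (NPO.J1 ξ) := by
      refine WithLp.ofLp_injective 2 (Prod.ext ?_ ?_)
      · simp
      · simp
    calc (t * x) ξ = t (x ξ) := rfl
      _ = (orthogonalProjection K (NPO.J1 (x ξ)) : WithLp 2 (H × H)).snd := t_apply _
      _ = (orthogonalProjection K (NPO.dOp x (α x) (NPO.J1 ξ)) : WithLp 2 (H × H)).snd := by
          rw [hJ]
      _ = (NPO.dOp x (α x) (orthogonalProjection K (NPO.J1 ξ) : WithLp 2 (H × H))).snd := by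
          rw [hcommQ x hx]
      _ = α x ((orthogonalProjection K (NPO.J1 ξ) : WithLp 2 (H × H)).snd) := rfl
      _ = α x (t ξ) := by rw [t_apply]
      _ = (α x * t) ξ := rfl
  -- every element of K satisfies a k.fst = c k.snd
  have hker : ∀ k ∈ K, a k.fst = c k.snd := by
    set L : WithLp 2 (H × H) →L[ℂ] H :=
      (a.comp ((ContinuousLinearMap.fst ℂ H H).comp
        (WithLp.prodContinuousLinearEquiv 2 ℂ H H).toContinuousLinearMap)) -
      (c.comp ((ContinuousLinearMap.snd ℂ H H).comp
        (WithLp.prodContinuousLinearEquiv 2 ℂ H H).toContinuousLinearMap)) with hL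
    have hL_apply : ∀ u : WithLp 2 (H × H), L u = a u.fst - c u.snd := fun u => rfl
    have hKle : K ≤ L.ker := by
      apply Submodule.topologicalClosure_minimal
      · rw [Submodule.span_le]
        rintro s ⟨y, hy, ξ, rfl⟩
        rw [SetLike.mem_coe, LinearMap.mem_ker, ContinuousLinearMap.coe_coe, hL_apply]
        have : a ((y * b) ξ) = c ((α y * d) ξ) := by
          have h := hrel y hy
          calc a ((y * b) ξ) = (a * y * b) ξ := rfl
            _ = (c * α y * d) ξ := by rw [h]
            _ = c ((α y * d) ξ) := rfl
        simpa [NPO.mk2] using sub_eq_zero_of_eq this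
      · exact ContinuousLinearMap.isClosed_ker L
    intro k hk
    have := hKle hk
    rw [LinearMap.mem_ker, ContinuousLinearMap.coe_coe, hL_apply] at this
    exact sub_eq_zero.mp this
  -- t is nonzero
  have htne : t ≠ 0 := by
    intro h0
    apply hne
    have hsnd : ∀ ξ : H, (orthogonalProjection K (NPO.J1 ξ) : WithLp 2 (H × H)).snd = 0 := by
      intro ξ
      rw [← t_apply, h0]
      rfl
    have hfst : ∀ η : H, (orthogonalProjection K (NPO.J2 η) : WithLp 2 (H × H)).fst = 0 := by
      intro η
      have hz : ∀ ξ : H,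
          ⟪(orthogonalProjection K (NPO.J2 η) : WithLp 2 (H × H)).fst, ξ⟫_ℂ = 0 := by
        intro ξ
        have h1 : ⟪(orthogonalProjection K (NPO.J2 η) : WithLp 2 (H × H)), NPO.J1 ξ⟫_ℂ
            = ⟪(orthogonalProjection K (NPO.J2 η) : WithLp 2 (H × H)).fst, ξ⟫_ℂ := by
          rw [WithLp.prod_inner_apply]
          simp
        have h2 : ⟪(orthogonalProjection K (NPO.J2 η) : WithLp 2 (H × H)), NPO.J1 ξ⟫_ℂ
            = ⟪(NPO.J2 η : WithLp 2 (H × H)),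
                (orthogonalProjection K (NPO.J1 ξ) : WithLp 2 (H × H))⟫_ℂ := by
          exact Submodule.inner_starProjection_left_eq_right (K := K) _ _
        rw [← h1, h2, WithLp.prod_inner_apply]
        have h3 : (K.starProjection (NPO.J1 ξ)).snd = 0 := hsnd ξ
        simp [h3]
      have := hz (orthogonalProjection K (NPO.J2 η) : WithLp 2 (H × H)).fst
      exact inner_self_eq_zero.mp this
    ext ξ
    set v : H := x₀ (b ξ) with hv
    set w : H := (α x₀) (d ξ) with hw
    have hgS : NPO.mk2 v w ∈ S := ⟨x₀, hx₀, ξ, rfl⟩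
    have hgK : NPO.mk2 v w ∈ K :=
      (Submodule.span ℂ S).le_topologicalClosure (Submodule.subset_span hgS)
    have hgproj : (orthogonalProjection K (NPO.mk2 v w) : WithLp 2 (H × H)) = NPO.mk2 v w :=
      Submodule.starProjection_eq_self_iff.mpr hgK
    have hdecomp : NPO.mk2 v w = NPO.J1 v + NPO.J2 w := by
      refine WithLp.ofLp_injective 2 (Prod.ext ?_ ?_)
      · simp
      · simp
    have hadd2 : (orthogonalProjection K (NPO.mk2 v w) : WithLp 2 (H × H))
        = (orthogonalProjection K (NPO.J1 v) : WithLp 2 (H × H))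
          + (orthogonalProjection K (NPO.J2 w) : WithLp 2 (H × H)) := by
      rw [hdecomp, map_add, Submodule.coe_add]
    have hfst1 : (orthogonalProjection K (NPO.J1 v) : WithLp 2 (H × H)).fst = v := by
      have h3 : (orthogonalProjection K (NPO.mk2 v w) : WithLp 2 (H × H)).fst = v := by
        rw [hgproj]; simp
      rw [hadd2] at h3
      have : (orthogonalProjection K (NPO.J1 v) : WithLp 2 (H × H)).fst
          + (orthogonalProjection K (NPO.J2 w) : WithLp 2 (H × H)).fst = v := h3
      rw [hfst w] at this
      simpa using this
    have hJvK : (NPO.J1 v : WithLp 2 (H × H)) ∈ K := by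
      rw [← Submodule.starProjection_eq_self_iff, Submodule.starProjection_apply]
      refine WithLp.ofLp_injective 2 (Prod.ext ?_ ?_)
      · have h3 : (K.starProjection (NPO.J1 v)).fst = v := hfst1; simp [h3]
      · have h3 : (K.starProjection (NPO.J1 v)).snd = 0 := hsnd v; simp [h3]
    have := hker _ hJvK
    rw [NPO.J1_fst, NPO.J1_snd, map_zero] at this
    calc (a * x₀ * b) ξ = a v := rfl
      _ = 0 := this
      _ = (0 : H →L[ℂ] H) ξ := rfl
  exact ⟨t, htQ, htne, hint⟩
end

section
/- Let G be a discrete group acting on a factor M by outer automorphisms α_g. If w ∈ M ⋊_α G is a unitary normalizing M (i.e., w*Mw = M), then there exist a unique g₀ ∈ G and a unitary u ∈ M such that w = u·λ_{g₀}. -/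
/- STATEMENT 13: Let G be a discrete group acting on a factor M by outer automorphisms α_g.
If w ∈ M ⋊_α G is a unitary normalizing M (w* M w = M), then there exist a unique g₀ ∈ G and
a unitary u ∈ M such that w = u·λ_{g₀}. -/

noncomputable section

lemma aux_star_rel {H : Type*} [NormedAddCommGroup H] [InnerProductSpace ℂ H] [CompleteSpace H]
    (Λ v x : H →L[ℂ] H) (h : star x * v = v * (Λ * star x * star Λ)) :
    star v * x = (Λ * x * star Λ) * star v := by
  have := congrArg star h
  simpa [star_mul, star_star, mul_assoc] using this

/-- If `v ∈ M` intertwines the identity with an outer automorphism `Ad Λ` of `M`, then `v = 0`. -/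
lemma aux_intertwiner_zero {H : Type*} [NormedAddCommGroup H] [InnerProductSpace ℂ H]
    [CompleteSpace H] (M : VonNeumannAlgebra H)
    (hfactor : ∀ z ∈ M, (∀ x ∈ M, z * x = x * z) → ∃ c : ℂ, z = c • (1 : H →L[ℂ] H))
    (Λ : H →L[ℂ] H)
    (hconj' : ∀ x ∈ M, star Λ * x * Λ ∈ M)
    (hU2 : Λ * star Λ = 1)
    (hout : ¬ ∃ u ∈ M, star u * u = 1 ∧ u * star u = 1 ∧
        ∀ x ∈ M, Λ * x * star Λ = u * x * star u)
    (v : H →L[ℂ] H) (hvM : v ∈ M)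
    (hrel : ∀ x ∈ M, x * v = v * (Λ * x * star Λ)) : v = 0 := by
  by_contra hv
  have hrel' : ∀ x ∈ M, star v * x = (Λ * x * star Λ) * star v := by
    intro x hx
    exact aux_star_rel Λ v x (by simpa using hrel (star x) (star_mem hx))
  -- v * star v commutes with M
  have h1 : ∀ x ∈ M, (v * star v) * x = x * (v * star v) := by
    intro x hx
    calc (v * star v) * x = v * (star v * x) := by rw [mul_assoc]
      _ = v * ((Λ * x * star Λ) * star v) := by rw [hrel' x hx]
      _ = (v * (Λ * x * star Λ)) * star v := by simp only [mul_assoc]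
      _ = (x * v) * star v := by rw [← hrel x hx]
      _ = x * (v * star v) := by rw [mul_assoc]
  -- star v * v commutes with M (via surjectivity of Ad Λ onto M)
  have h2 : ∀ y ∈ M, (star v * v) * y = y * (star v * v) := by
    intro y hy
    have hxM : star Λ * y * Λ ∈ M := hconj' y hy
    have hβ : Λ * (star Λ * y * Λ) * star Λ = y := by
      calc Λ * (star Λ * y * Λ) * star Λ = (Λ * star Λ) * y * (Λ * star Λ) := by
            simp only [mul_assoc]
        _ = y := by rw [hU2]; simp
    calc (star v * v) * y = star v * (v * (Λ * (star Λ * y * Λ) * star Λ)) := by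
          rw [hβ, mul_assoc]
      _ = star v * ((star Λ * y * Λ) * v) := by rw [← hrel _ hxM]
      _ = (star v * (star Λ * y * Λ)) * v := by simp only [mul_assoc]
      _ = ((Λ * (star Λ * y * Λ) * star Λ) * star v) * v := by rw [hrel' _ hxM]
      _ = y * (star v * v) := by rw [hβ, mul_assoc]
  obtain ⟨c, hc⟩ := hfactor (v * star v) (mul_mem hvM (star_mem hvM)) h1
  obtain ⟨c', hc'⟩ := hfactor (star v * v) (mul_mem (star_mem hvM) hvM)
    (fun x hx => h2 x hx)
  -- c = c'
  have hcc : c = c' := by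
    have h3 : c • v = c' • v := by
      have : (v * star v) * v = v * (star v * v) := by rw [mul_assoc]
      rw [hc, hc'] at this
      simpa [smul_mul_assoc, mul_smul_comm] using this
    have := sub_eq_zero.mpr h3
    rw [← sub_smul] at this
    rcases smul_eq_zero.mp this with h | h
    · exact sub_eq_zero.mp h
    · exact absurd h hv
  -- c' is a positive real
  obtain ⟨ξ, hξ⟩ : ∃ ξ : H, v ξ ≠ 0 := by
    by_contra hall
    push_neg at hall
    exact hv (ContinuousLinearMap.ext fun ξ => by rw [hall ξ]; rfl)
  have hξ0 : ξ ≠ 0 := fun h => hξ (by rw [h, map_zero])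
  have hinner : (inner ℂ ξ ((star v * v) ξ) : ℂ) = inner ℂ (v ξ) (v ξ) := by
    rw [ContinuousLinearMap.mul_apply, ContinuousLinearMap.star_eq_adjoint,
      ContinuousLinearMap.adjoint_inner_right]
  have hcval : c' * (inner ℂ ξ ξ : ℂ) = inner ℂ (v ξ) (v ξ) := by
    rw [← hinner, hc']
    simp [inner_smul_right]
  have hinnerξ : (inner ℂ ξ ξ : ℂ) = (‖ξ‖ : ℂ) ^ 2 := by
    rw [inner_self_eq_norm_sq_to_K]; norm_num
  have hinnervξ : (inner ℂ (v ξ) (v ξ) : ℂ) = (‖v ξ‖ : ℂ) ^ 2 := by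
    rw [inner_self_eq_norm_sq_to_K]; norm_num
  have hnξ : (0:ℝ) < ‖ξ‖ := norm_pos_iff.mpr hξ0
  have hnvξ : (0:ℝ) < ‖v ξ‖ := norm_pos_iff.mpr hξ
  set r : ℝ := ‖v ξ‖ ^ 2 / ‖ξ‖ ^ 2 with hr
  have hrpos : 0 < r := div_pos (pow_pos hnvξ 2) (pow_pos hnξ 2)
  have hc'r : c' = (r : ℂ) := by
    have h4 : c' * (‖ξ‖:ℂ)^2 = (‖v ξ‖:ℂ)^2 := by rw [← hinnerξ, ← hinnervξ, hcval]
    have hne : ((‖ξ‖:ℂ))^2 ≠ 0 := pow_ne_zero 2 (by exact_mod_cast ne_of_gt hnξ)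
    rw [hr]
    push_cast
    rw [eq_div_iff hne]
    exact h4
  -- build the unitary
  set s : ℝ := (Real.sqrt r)⁻¹ with hs
  have hsr : (s:ℂ) * (s:ℂ) * (r:ℂ) = 1 := by
    have h5 : s * s * r = 1 := by
      rw [hs, ← Real.sqrt_mul_self (le_of_lt hrpos)]
      field_simp
      rw [Real.sq_sqrt (Real.sqrt_nonneg _)]
    exact_mod_cast h5
  set u : H →L[ℂ] H := (s:ℂ) • star v with hu
  have huM : u ∈ M := M.toStarSubalgebra.smul_mem (star_mem hvM) _
  have hstaru : star u = (s:ℂ) • v := by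
    rw [hu, star_smul, star_star]
    simp
  have hu1 : star u * u = 1 := by
    rw [hstaru, hu, smul_mul_smul_comm, hc, hcc, hc'r, smul_smul, hsr]
    simp
  have hu2 : u * star u = 1 := by
    rw [hstaru, hu, smul_mul_smul_comm, hc', hc'r, smul_smul, hsr]
    simp
  refine hout ⟨u, huM, hu1, hu2, fun x hx => ?_⟩
  -- Λ x Λ* = u x u*
  have h6 : v * (Λ * x * star Λ) * star v = x * (v * star v) := by
    rw [← hrel x hx, mul_assoc]
  have h7 : star v * (x * (v * star v)) = (star v * v) * (Λ * x * star Λ) * star v := by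
    calc star v * (x * (v * star v)) = (star v * x) * v * star v := by
          simp only [mul_assoc]
      _ = ((Λ * x * star Λ) * star v) * v * star v := by rw [hrel' x hx]
      _ = (Λ * x * star Λ) * (star v * v) * star v := by simp only [mul_assoc]
      _ = (Λ * x * star Λ) * (c' • (1:H →L[ℂ] H)) * star v := by rw [hc']
      _ = (star v * v) * (Λ * x * star Λ) * star v := by
          rw [hc']
          simp [mul_smul_comm, smul_mul_assoc]
  -- from hrel': star v * x * v = (Λ x Λ*) * (star v * v) = c' • (Λ x Λ*)
  have h8 : star v * x * v = c' • (Λ * x * star Λ) := by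
    calc star v * x * v = ((Λ * x * star Λ) * star v) * v := by rw [hrel' x hx]
      _ = (Λ * x * star Λ) * (star v * v) := by rw [mul_assoc]
      _ = c' • (Λ * x * star Λ) := by rw [hc']; simp [mul_smul_comm]
  have h9 : u * x * star u = ((s:ℂ) * (s:ℂ)) • (star v * x * v) := by
    rw [hu, hstaru, smul_mul_assoc, smul_mul_assoc, mul_smul_comm, smul_smul]
  rw [h9, h8, hc'r, smul_smul, hsr, one_smul]

theorem unitary_normalizer_eq_unitary_mul_lam
    {H : Type*} [NormedAddCommGroup H] [InnerProductSpace ℂ H] [CompleteSpace H]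
    (G : Type*) [Group G]
    -- M ⊆ N, M a factor; N plays the role of the crossed product M ⋊_α G:
    (M N : VonNeumannAlgebra H) (hMN : (M : Set (H →L[ℂ] H)) ⊆ N)
    (hfactor : ∀ z ∈ M, (∀ x ∈ M, z * x = x * z) → ∃ c : ℂ, z = c • (1 : H →L[ℂ] H))
    -- the canonical unitaries λ_g implementing the action α_g = Ad λ_g on M:
    (lam : G → (H →L[ℂ] H))
    (hlamN : ∀ g, lam g ∈ N)
    (hlamU : ∀ g, star (lam g) * lam g = 1 ∧ lam g * star (lam g) = 1)
    (hlamone : lam 1 = 1)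
    (hlammul : ∀ g h, lam g * lam h = lam (g * h))
    (hcov : ∀ g, ∀ x ∈ M, lam g * x * star (lam g) ∈ M)
    -- α_g ∘ α_h⁻¹ is an outer automorphism of M whenever g ≠ h:
    (houter : ∀ g h : G, g ≠ h →
      ¬ ∃ u ∈ M, star u * u = 1 ∧ u * star u = 1 ∧
          ∀ x ∈ M, lam g * (star (lam h) * x * lam h) * star (lam g) = u * x * star u)
    -- E is the canonical (faithful, normal) conditional expectation of N onto M:
    (E : (H →L[ℂ] H) →ₗ[ℂ] (H →L[ℂ] H))
    (hrange : ∀ x ∈ N, E x ∈ M)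
    (hid : ∀ m ∈ M, E m = m)
    (hbimod : ∀ m₁ ∈ M, ∀ m₂ ∈ M, ∀ x ∈ N, E (m₁ * x * m₂) = m₁ * E x * m₂)
    (hpos : ∀ x ∈ N, (E (star x * x)).IsPositive)
    (hfaithful : ∀ x ∈ N, E (star x * x) = 0 → x = 0)
    (hnormal : @Continuous _ _ (sigmaWeak H) (sigmaWeak H) E)
    -- the Fourier coefficients x_g = E(x λ_g*) separate the points of N:
    (hsep : ∀ x ∈ N, (∀ g : G, E (x * star (lam g)) = 0) → x = 0)
    -- w is a unitary of N normalizing M: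
    (w : H →L[ℂ] H) (hwN : w ∈ N)
    (hwU : star w * w = 1 ∧ w * star w = 1)
    (hwnorm : ∀ x ∈ M, star w * x * w ∈ M ∧ w * x * star w ∈ M) :
    ∃! g₀ : G, ∃ u ∈ M, star u * u = 1 ∧ u * star u = 1 ∧ w = u * lam g₀ := by
  classical
  -- basic facts about the unitaries `lam`
  have hlaminv : ∀ g : G, lam g * lam g⁻¹ = 1 := by
    intro g; rw [hlammul]; simp [hlamone]
  have slam : ∀ g : G, star (lam g) = lam g⁻¹ := by
    intro g
    calc star (lam g) = star (lam g) * (lam g * lam g⁻¹) := by rw [hlaminv, mul_one]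
      _ = (star (lam g) * lam g) * lam g⁻¹ := by rw [mul_assoc]
      _ = lam g⁻¹ := by rw [(hlamU g).1, one_mul]
  have hcov' : ∀ g : G, ∀ x ∈ M, star (lam g) * x * lam g ∈ M := by
    intro g x hx
    have h := hcov g⁻¹ x hx
    rwa [slam g⁻¹, inv_inv, ← slam g] at h
  by_cases htriv : (1 : H →L[ℂ] H) = 0
  · -- degenerate case : the zero Hilbert space
    have hall : ∀ a : H →L[ℂ] H, a = 0 := fun a => by
      calc a = a * 1 := (mul_one a).symm
        _ = a * 0 := by rw [htriv]
        _ = 0 := mul_zero a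
    have hG : ∀ g : G, g = 1 := by
      intro g
      by_contra hg
      exact houter g 1 hg ⟨0, zero_mem M, (hall _).trans (hall 1).symm,
        (hall _).trans (hall 1).symm, fun x _ => (hall _).trans (hall _).symm⟩
    exact ⟨1, ⟨0, zero_mem M, (hall _).trans (hall 1).symm, (hall _).trans (hall 1).symm,
      (hall w).trans (hall _).symm⟩, fun y _ => hG y⟩
  -- main case
  have hlamsN : ∀ g : G, star (lam g) ∈ N := fun g => star_mem (hlamN g)
  have hwlN : ∀ g : G, w * star (lam g) ∈ N := fun g => mul_mem hwN (hlamsN g)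
  set wc : G → (H →L[ℂ] H) := fun g => E (w * star (lam g)) with hwc
  have hwcM : ∀ g, wc g ∈ M := fun g => hrange _ (hwlN g)
  -- the fundamental relation for the Fourier coefficients of w
  have relA : ∀ g : G, ∀ x ∈ M,
      wc g * (lam g * x * star (lam g)) = (w * x * star w) * wc g := by
    intro g x hx
    have e1 : (w * star (lam g)) * (lam g * x * star (lam g)) = w * x * star (lam g) := by
      calc (w * star (lam g)) * (lam g * x * star (lam g))
          = w * ((star (lam g) * lam g) * (x * star (lam g))) := by simp only [mul_assoc]
        _ = w * x * star (lam g) := by rw [(hlamU g).1, one_mul, ← mul_assoc]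
    have e2 : (w * x * star w) * (w * star (lam g)) = w * x * star (lam g) := by
      calc (w * x * star w) * (w * star (lam g))
          = w * x * ((star w * w) * star (lam g)) := by simp only [mul_assoc]
        _ = w * x * star (lam g) := by rw [hwU.1, one_mul]
    have h1 := hbimod 1 (one_mem M) (lam g * x * star (lam g)) (hcov g x hx)
      (w * star (lam g)) (hwlN g)
    have h2 := hbimod (w * x * star w) (hwnorm x hx).2 1 (one_mem M)
      (w * star (lam g)) (hwlN g)
    have h1' : E (w * x * star (lam g)) = wc g * (lam g * x * star (lam g)) := by
      calc E (w * x * star (lam g))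
          = E (1 * (w * star (lam g)) * (lam g * x * star (lam g))) := by rw [one_mul, e1]
        _ = 1 * E (w * star (lam g)) * (lam g * x * star (lam g)) := h1
        _ = wc g * (lam g * x * star (lam g)) := by rw [one_mul, hwc]
    have h2' : E (w * x * star (lam g)) = (w * x * star w) * wc g := by
      calc E (w * x * star (lam g))
          = E ((w * x * star w) * (w * star (lam g)) * 1) := by rw [mul_one, e2]
        _ = (w * x * star w) * E (w * star (lam g)) * 1 := h2
        _ = (w * x * star w) * wc g := by rw [mul_one, hwc]
    exact h1'.symm.trans h2'
  have starRel : ∀ g : G, ∀ x ∈ M,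
      (lam g * x * star (lam g)) * star (wc g) = star (wc g) * (w * x * star w) := by
    intro g x hx
    have h := congrArg star (relA g (star x) (star_mem hx))
    simpa [star_mul, star_star, mul_assoc] using h
  -- cross intertwining relation
  have hrelv : ∀ g h : G, ∀ x ∈ M,
      x * (star (wc h) * wc g) =
        (star (wc h) * wc g) * ((lam g * star (lam h)) * x * star (lam g * star (lam h))) := by
    intro g h x hx
    have hmM : star (lam h) * x * lam h ∈ M := hcov' h x hx
    have hαh : lam h * (star (lam h) * x * lam h) * star (lam h) = x := by
      calc lam h * (star (lam h) * x * lam h) * star (lam h)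
          = (lam h * star (lam h)) * x * (lam h * star (lam h)) := by simp only [mul_assoc]
        _ = x := by rw [(hlamU h).2, one_mul, mul_one]
    have hαg : (lam g * star (lam h)) * x * star (lam g * star (lam h)) =
        lam g * (star (lam h) * x * lam h) * star (lam g) := by
      rw [star_mul, star_star]; simp only [mul_assoc]
    have step1 : x * star (wc h) = star (wc h) * (w * (star (lam h) * x * lam h) * star w) := by
      have h' := starRel h (star (lam h) * x * lam h) hmM
      rwa [hαh] at h'
    have step2 : (w * (star (lam h) * x * lam h) * star w) * wc g =
        wc g * (lam g * (star (lam h) * x * lam h) * star (lam g)) := (relA g _ hmM).symm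
    calc x * (star (wc h) * wc g) = (x * star (wc h)) * wc g := (mul_assoc _ _ _).symm
      _ = (star (wc h) * (w * (star (lam h) * x * lam h) * star w)) * wc g := by rw [step1]
      _ = star (wc h) * ((w * (star (lam h) * x * lam h) * star w) * wc g) := mul_assoc _ _ _
      _ = star (wc h) * (wc g * (lam g * (star (lam h) * x * lam h) * star (lam g))) := by
          rw [step2]
      _ = (star (wc h) * wc g) * (lam g * (star (lam h) * x * lam h) * star (lam g)) :=
          (mul_assoc _ _ _).symm
      _ = (star (wc h) * wc g) * ((lam g * star (lam h)) * x * star (lam g * star (lam h))) := by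
          rw [hαg]
  have hΛeq : ∀ g h : G, lam g * star (lam h) = lam (g * h⁻¹) := by
    intro g h; rw [slam, hlammul]
  -- off-diagonal products of Fourier coefficients vanish
  have hcross : ∀ g h : G, g ≠ h → star (wc h) * wc g = 0 := by
    intro g h hgh
    refine aux_intertwiner_zero M hfactor (lam g * star (lam h)) ?_ ?_ ?_ _
      (mul_mem (star_mem (hwcM h)) (hwcM g)) (hrelv g h)
    · intro x hx
      rw [hΛeq]
      exact hcov' (g * h⁻¹) x hx
    · rw [hΛeq]; exact (hlamU _).2
    · rintro ⟨u, huM, hu1, hu2, hueq⟩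
      refine houter g h hgh ⟨u, huM, hu1, hu2, fun x hx => ?_⟩
      have h' := hueq x hx
      rw [star_mul, star_star] at h'
      calc lam g * (star (lam h) * x * lam h) * star (lam g)
          = (lam g * star (lam h)) * x * (lam h * star (lam g)) := by simp only [mul_assoc]
        _ = u * x * star u := h'
  -- choose a nonvanishing Fourier coefficient
  have hwne : w ≠ 0 := by
    intro h0
    apply htriv
    rw [← hwU.1, h0]
    simp
  have hex : ∃ g : G, E (w * star (lam g)) ≠ 0 := by
    by_contra hall
    push_neg at hall
    exact hwne (hsep w hwN hall)
  obtain ⟨g₀, hg₀⟩ := hex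
  set u₀ := wc g₀ with hu₀
  have hu₀ne : u₀ ≠ 0 := hg₀
  -- star u₀ * u₀ and u₀ * star u₀ are scalars
  have hdiag1 : ∀ x ∈ M, (star u₀ * u₀) * x = x * (star u₀ * u₀) := by
    intro x hx
    have h := hrelv g₀ g₀ x hx
    rw [(hlamU g₀).2] at h
    simpa using h.symm
  obtain ⟨c, hc⟩ := hfactor (star u₀ * u₀) (mul_mem (star_mem (hwcM g₀)) (hwcM g₀)) hdiag1
  have hdiag2 : ∀ y ∈ M, (u₀ * star u₀) * y = y * (u₀ * star u₀) := by
    intro y hy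
    have hxM : star w * y * w ∈ M := (hwnorm y hy).1
    have hyx : w * (star w * y * w) * star w = y := by
      calc w * (star w * y * w) * star w
          = (w * star w) * y * (w * star w) := by simp only [mul_assoc]
        _ = y := by rw [hwU.2, one_mul, mul_one]
    have e1 := relA g₀ _ hxM
    have e2 := starRel g₀ _ hxM
    rw [hyx] at e1 e2
    calc (u₀ * star u₀) * y = u₀ * (star u₀ * y) := mul_assoc _ _ _
      _ = u₀ * ((lam g₀ * (star w * y * w) * star (lam g₀)) * star u₀) := by rw [← e2]
      _ = (u₀ * (lam g₀ * (star w * y * w) * star (lam g₀))) * star u₀ := (mul_assoc _ _ _).symm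
      _ = (y * u₀) * star u₀ := by rw [e1]
      _ = y * (u₀ * star u₀) := mul_assoc _ _ _
  obtain ⟨c', hc'⟩ := hfactor (u₀ * star u₀) (mul_mem (hwcM g₀) (star_mem (hwcM g₀))) hdiag2
  have hcc : c = c' := by
    have h3 : u₀ * (star u₀ * u₀) = (u₀ * star u₀) * u₀ := (mul_assoc _ _ _).symm
    rw [hc, hc'] at h3
    have h3' : c • u₀ = c' • u₀ := by simpa [mul_smul_comm, smul_mul_assoc] using h3
    have h4 := sub_eq_zero.mpr h3'
    rw [← sub_smul] at h4
    rcases smul_eq_zero.mp h4 with h | h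
    · exact sub_eq_zero.mp h
    · exact absurd h hu₀ne
  have hcne : c ≠ 0 := by
    intro h0
    apply hu₀ne
    apply CStarRing.star_mul_self_eq_zero_iff u₀ |>.mp
    rw [hc, h0, zero_smul]
  -- all other Fourier coefficients of w vanish
  have hvanish : ∀ g : G, g ≠ g₀ → wc g = 0 := by
    intro g hgne
    have h0 : star (wc g) * u₀ = 0 := hcross g₀ g (Ne.symm hgne)
    have h1 : star (wc g) * (u₀ * star u₀) = 0 := by rw [← mul_assoc, h0, zero_mul]
    rw [hc'] at h1
    have h2 : c' • star (wc g) = 0 := by simpa [mul_smul_comm] using h1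
    rcases smul_eq_zero.mp h2 with h | h
    · exact absurd (hcc.trans h) hcne
    · exact star_eq_zero.mp h
  -- E kills the canonical unitaries lam k for k ≠ 1
  have hElam : ∀ k : G, k ≠ 1 → E (lam k) = 0 := by
    intro k hk
    have hEkM : E (lam k) ∈ M := hrange _ (hlamN k)
    have hrelk : ∀ x ∈ M, x * E (lam k) = E (lam k) * (lam k⁻¹ * x * star (lam k⁻¹)) := by
      intro x hx
      have hmM : lam k⁻¹ * x * star (lam k⁻¹) ∈ M := hcov k⁻¹ x hx
      have hkm : lam k * (lam k⁻¹ * x * star (lam k⁻¹)) = x * lam k := by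
        rw [slam, inv_inv]
        calc lam k * (lam k⁻¹ * x * lam k)
            = (lam k * lam k⁻¹) * (x * lam k) := by simp only [mul_assoc]
          _ = x * lam k := by rw [hlaminv, one_mul]
      have e1 : E (lam k * (lam k⁻¹ * x * star (lam k⁻¹))) =
          E (lam k) * (lam k⁻¹ * x * star (lam k⁻¹)) := by
        have h' := hbimod 1 (one_mem M) _ hmM (lam k) (hlamN k)
        simpa using h'
      have e2 : E (x * lam k) = x * E (lam k) := by
        have h' := hbimod x hx 1 (one_mem M) (lam k) (hlamN k)
        simpa using h'
      rw [← hkm, e1] at e2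
      exact e2.symm
    refine aux_intertwiner_zero M hfactor (lam k⁻¹) ?_ ?_ ?_ _ hEkM hrelk
    · intro x hx
      rw [slam, inv_inv, ← slam k]
      exact hcov k x hx
    · exact (hlamU k⁻¹).2
    · rintro ⟨u, huM, hu1, hu2, hueq⟩
      refine houter k⁻¹ 1 (fun h => hk (by rwa [inv_eq_one] at h))
        ⟨u, huM, hu1, hu2, fun x hx => ?_⟩
      have h' := hueq x hx
      simpa [hlamone] using h'
  -- conclude w = u₀ * lam g₀
  have hzN : w - u₀ * lam g₀ ∈ N :=
    sub_mem hwN (mul_mem (hMN (hwcM g₀)) (hlamN g₀))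
  have hz : w - u₀ * lam g₀ = 0 := by
    apply hsep _ hzN
    intro g
    have hsplit : (w - u₀ * lam g₀) * star (lam g) =
        w * star (lam g) - u₀ * lam (g₀ * g⁻¹) := by
      rw [sub_mul, mul_assoc, hΛeq g₀ g]
    rw [hsplit, map_sub]
    have hE2 : E (u₀ * lam (g₀ * g⁻¹)) = u₀ * E (lam (g₀ * g⁻¹)) := by
      have h' := hbimod u₀ (hwcM g₀) 1 (one_mem M) (lam (g₀ * g⁻¹)) (hlamN _)
      simpa using h'
    rw [hE2]
    by_cases hgg : g = g₀
    · subst hgg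
      have hone : (g : G) * g⁻¹ = 1 := by group
      rw [hone, hlamone, hid 1 (one_mem M), mul_one, sub_eq_zero]
    · have h1 : E (w * star (lam g)) = 0 := hvanish g hgg
      have h2 : E (lam (g₀ * g⁻¹)) = 0 :=
        hElam _ (fun h => hgg ((mul_inv_eq_one.mp h).symm))
      rw [h1, h2, mul_zero, sub_zero]
  have hweq : w = u₀ * lam g₀ := sub_eq_zero.mp hz
  have hu₀w : u₀ = w * star (lam g₀) := by
    rw [hweq, mul_assoc, (hlamU g₀).2, mul_one]
  have hU1 : star u₀ * u₀ = 1 := by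
    rw [hu₀w, star_mul, star_star]
    calc (lam g₀ * star w) * (w * star (lam g₀))
        = lam g₀ * ((star w * w) * star (lam g₀)) := by simp only [mul_assoc]
      _ = 1 := by rw [hwU.1, one_mul, (hlamU g₀).2]
  have hU2 : u₀ * star u₀ = 1 := by
    rw [hu₀w, star_mul, star_star]
    calc (w * star (lam g₀)) * (lam g₀ * star w)
        = w * ((star (lam g₀) * lam g₀) * star w) := by simp only [mul_assoc]
      _ = 1 := by rw [(hlamU g₀).1, one_mul, hwU.2]
  refine ⟨g₀, ⟨u₀, hwcM g₀, hU1, hU2, hweq⟩, ?_⟩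
  rintro g ⟨u, huM, hq1, hq2, hweq'⟩
  by_contra hne
  have he : u = u₀ * lam (g₀ * g⁻¹) := by
    have h' : u * lam g * star (lam g) = u₀ * lam g₀ * star (lam g) := by
      rw [← hweq', ← hweq]
    rwa [mul_assoc, (hlamU g).2, mul_one, mul_assoc, hΛeq] at h'
  have hq : star u₀ * u = lam (g₀ * g⁻¹) := by
    rw [he, ← mul_assoc, hU1, one_mul]
  have hkne : (g₀ * g⁻¹ : G) ≠ 1 := fun h => hne ((mul_inv_eq_one.mp h).symm)
  refine houter (g₀ * g⁻¹) 1 hkne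
    ⟨star u₀ * u, mul_mem (star_mem (hwcM g₀)) huM, ?_, ?_, fun x hx => ?_⟩
  · rw [hq]; exact (hlamU _).1
  · rw [hq]; exact (hlamU _).2
  · rw [hq]
    simp [hlamone]

end
end
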